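/- Let θ₂^∞, θ₃^∞ ∈ ℂ with θ₂^∞+θ₃^∞ = 0. Let I ⊆ ℝ be an open interval with 0 ∉ I and let q₁,q₂,p₁,p₂,u : I → ℂ be differentiable with u(t) ≠ 0 and q₁(t)² + q₂(t) ≠ 0 (so that Q(t) is invertible). Define Q(t) = [[q₁, u],[−q₂/u, q₁]], P(t) = [[p₁/2, −p₂u],[(p₂q₂−θ₂^∞)/u, p₁/2]]. Define A₀(t) = [[O, O],[−tQ⁻¹, O]], A₁(t) = [[QP, −Q],[I, −PQ−I]], A₂ = [[O, I],[O, O]], B₀(t) = (1/t)[[O, Q],[O, O]], B₁(t) = [[O, O],[Q⁻¹, O]], and A(x,t) = A₀/x² + A₁/x + A₂, B(x,t) = B₀ + B₁/x. Then the zero-curvature equation ∂A/∂t − ∂B/∂x + [A, B] = O holds for all t ∈ I and all x ∈ ℂ ∖ {0} if and only if tQ′ = 2QPQ + Q and tP′ = −2PQP − P + I − tQ⁻² hold on I. -/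

import Mathlib

open Matrix

noncomputable section

/-- Entrywise derivative of a matrix-valued function of a real variable. -/
def matDeriv {m n : Type*} (F : ℝ → Matrix m n ℂ) (t : ℝ) : Matrix m n ℂ :=
  Matrix.of fun i j => deriv (fun s => F s i j) t

/-- `Q = [[q₁, u],[−q₂/u, q₁]]`. -/
def Qf (q1 q2 u : ℝ → ℂ) (t : ℝ) : Matrix (Fin 2) (Fin 2) ℂ :=
  !![q1 t, u t; -(q2 t)/(u t), q1 t]

/-- `P = [[p₁/2, −p₂u],[(p₂q₂−θ)/u, p₁/2]]`. -/
def Pf (p1 p2 q2 : ℝ → ℂ) (θ : ℂ) (u : ℝ → ℂ) (t : ℝ) : Matrix (Fin 2) (Fin 2) ℂ :=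
  !![p1 t/2, -(p2 t)*(u t); ((p2 t)*(q2 t) - θ)/(u t), p1 t/2]

/-- `A₀(t) = [[O, O],[−tQ⁻¹, O]]`. -/
def A0f (Q : Matrix (Fin 2) (Fin 2) ℂ) (t : ℂ) : Matrix (Fin 2 ⊕ Fin 2) (Fin 2 ⊕ Fin 2) ℂ :=
  fromBlocks 0 0 (-(t • Q⁻¹)) 0

/-- `A₁(t) = [[QP, −Q],[I, −PQ−I]]`. -/
def A1f (Q P : Matrix (Fin 2) (Fin 2) ℂ) : Matrix (Fin 2 ⊕ Fin 2) (Fin 2 ⊕ Fin 2) ℂ :=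
  fromBlocks (Q * P) (-Q) 1 (-(P * Q) - 1)

/-- `A₂ = [[O, I],[O, O]]`. -/
def A2c : Matrix (Fin 2 ⊕ Fin 2) (Fin 2 ⊕ Fin 2) ℂ := fromBlocks 0 1 0 0

/-- `B₀(t) = (1/t)[[O, Q],[O, O]]`. -/
def B0f (Q : Matrix (Fin 2) (Fin 2) ℂ) (t : ℂ) : Matrix (Fin 2 ⊕ Fin 2) (Fin 2 ⊕ Fin 2) ℂ :=
  t⁻¹ • fromBlocks 0 Q 0 0

/-- `B₁(t) = [[O, O],[Q⁻¹, O]]`. -/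
def B1f (Q : Matrix (Fin 2) (Fin 2) ℂ) : Matrix (Fin 2 ⊕ Fin 2) (Fin 2 ⊕ Fin 2) ℂ :=
  fromBlocks 0 0 Q⁻¹ 0

/-- `A(x,t) = A₀/x² + A₁/x + A₂`. -/
def Afun (Q P : ℝ → Matrix (Fin 2) (Fin 2) ℂ) (x : ℂ) (t : ℝ) :
    Matrix (Fin 2 ⊕ Fin 2) (Fin 2 ⊕ Fin 2) ℂ :=
  (x ^ 2)⁻¹ • A0f (Q t) (t : ℂ) + x⁻¹ • A1f (Q t) (P t) + A2c

/-- `B(x,t) = B₀ + B₁/x`. -/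
def Bfun (Q : ℝ → Matrix (Fin 2) (Fin 2) ℂ) (x : ℂ) (t : ℝ) :
    Matrix (Fin 2 ⊕ Fin 2) (Fin 2 ⊕ Fin 2) ℂ :=
  B0f (Q t) (t : ℂ) + x⁻¹ • B1f (Q t)

/-! ### Auxiliary: entrywise differentiability and derivative calculus -/

/-- entrywise differentiability -/
def MDiff {m n : Type*} (F : ℝ → Matrix m n ℂ) (t : ℝ) : Prop :=
  ∀ i j, DifferentiableAt ℝ (fun s => F s i j) t

namespace MDiff
variable {m n k : Type*} {F G : ℝ → Matrix m n ℂ} {t : ℝ}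

theorem const (C : Matrix m n ℂ) : MDiff (fun _ => C) t := fun _ _ => differentiableAt_const _

theorem add (hF : MDiff F t) (hG : MDiff G t) : MDiff (fun s => F s + G s) t := by
  intro i j
  simpa [Matrix.add_apply] using (hF i j).fun_add (hG i j)

theorem neg (hF : MDiff F t) : MDiff (fun s => -(F s)) t := by
  intro i j; simpa [Matrix.neg_apply] using (hF i j).neg

theorem sub (hF : MDiff F t) (hG : MDiff G t) : MDiff (fun s => F s - G s) t := by
  intro i j; simpa [Matrix.sub_apply] using (hF i j).fun_sub (hG i j)

theorem smul (c : ℂ) (hF : MDiff F t) : MDiff (fun s => c • F s) t := by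
  intro i j; simpa [Matrix.smul_apply, smul_eq_mul] using (hF i j).const_mul c

theorem mul [Fintype n] {G : ℝ → Matrix n k ℂ} (hF : MDiff F t) (hG : MDiff G t) :
    MDiff (fun s => F s * G s) t := by
  intro i j
  simp only [Matrix.mul_apply]
  exact DifferentiableAt.fun_sum fun l _ => (hF i l).fun_mul (hG l j)

theorem ofReal_smul (hF : MDiff F t) : MDiff (fun s => (s : ℂ) • F s) t := by
  intro i j
  simpa [Matrix.smul_apply, smul_eq_mul] using
    (Complex.ofRealCLM.differentiableAt).fun_mul (hF i j)

theorem fromBlocks {k l : Type*} {F1 : ℝ → Matrix m n ℂ} {F2 : ℝ → Matrix m l ℂ}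
    {F3 : ℝ → Matrix k n ℂ} {F4 : ℝ → Matrix k l ℂ}
    (h1 : MDiff F1 t) (h2 : MDiff F2 t) (h3 : MDiff F3 t) (h4 : MDiff F4 t) :
    MDiff (fun s => Matrix.fromBlocks (F1 s) (F2 s) (F3 s) (F4 s)) t := by
  rintro (i | i) (j | j)
  · simpa [Matrix.fromBlocks] using h1 i j
  · simpa [Matrix.fromBlocks] using h2 i j
  · simpa [Matrix.fromBlocks] using h3 i j
  · simpa [Matrix.fromBlocks] using h4 i j

theorem congr_of_eventuallyEq (h : F =ᶠ[nhds t] G) (hG : MDiff G t) : MDiff F t := by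
  intro i j
  exact (hG i j).congr_of_eventuallyEq (h.mono fun s hs => by simp only [hs])

end MDiff

section matDerivLemmas
variable {m n k : Type*} {F G : ℝ → Matrix m n ℂ} {t : ℝ}

theorem matDeriv_congr (h : F =ᶠ[nhds t] G) : matDeriv F t = matDeriv G t := by
  ext i j
  exact Filter.EventuallyEq.deriv_eq (h.mono fun s hs => by simp only [hs])

theorem matDeriv_const (C : Matrix m n ℂ) : matDeriv (fun _ => C) t = 0 := by
  ext i j; simp [matDeriv]

theorem matDeriv_add (hF : MDiff F t) (hG : MDiff G t) :
    matDeriv (fun s => F s + G s) t = matDeriv F t + matDeriv G t := by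
  ext i j
  simp only [matDeriv, Matrix.add_apply, Matrix.of_apply]
  exact deriv_add (hF i j) (hG i j)

theorem matDeriv_neg : matDeriv (fun s => -(F s)) t = -(matDeriv F t) := by
  ext i j
  simp only [matDeriv, Matrix.neg_apply, Matrix.of_apply]
  exact deriv.neg

theorem matDeriv_sub (hF : MDiff F t) (hG : MDiff G t) :
    matDeriv (fun s => F s - G s) t = matDeriv F t - matDeriv G t := by
  ext i j
  simp only [matDeriv, Matrix.sub_apply, Matrix.of_apply]
  exact deriv_sub (hF i j) (hG i j)

theorem matDeriv_smul (c : ℂ) : matDeriv (fun s => c • F s) t = c • matDeriv F t := by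
  ext i j
  simp only [matDeriv, Matrix.smul_apply, Matrix.of_apply, smul_eq_mul]
  exact deriv_const_mul_field c

theorem matDeriv_mul [Fintype n] {G : ℝ → Matrix n k ℂ} (hF : MDiff F t) (hG : MDiff G t) :
    matDeriv (fun s => F s * G s) t = matDeriv F t * G t + F t * matDeriv G t := by
  ext i j
  simp only [matDeriv, Matrix.mul_apply, Matrix.add_apply, Matrix.of_apply]
  rw [deriv_fun_sum (fun l _ => (hF i l).fun_mul (hG l j))]
  rw [← Finset.sum_add_distrib]
  exact Finset.sum_congr rfl fun l _ => deriv_fun_mul (hF i l) (hG l j)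

theorem matDeriv_ofReal_smul (hF : MDiff F t) :
    matDeriv (fun s => (s : ℂ) • F s) t = F t + (t : ℂ) • matDeriv F t := by
  ext i j
  simp only [matDeriv, Matrix.smul_apply, Matrix.add_apply, Matrix.of_apply, smul_eq_mul]
  have h1 : HasDerivAt (fun s : ℝ => (s : ℂ)) 1 t := Complex.ofRealCLM.hasDerivAt
  have := (h1.fun_mul (hF i j).hasDerivAt).deriv
  rw [this]; ring

theorem matDeriv_fromBlocks {k l : Type*} {F1 : ℝ → Matrix m n ℂ} {F2 : ℝ → Matrix m l ℂ}
    {F3 : ℝ → Matrix k n ℂ} {F4 : ℝ → Matrix k l ℂ} :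
    matDeriv (fun s => Matrix.fromBlocks (F1 s) (F2 s) (F3 s) (F4 s)) t
      = Matrix.fromBlocks (matDeriv F1 t) (matDeriv F2 t) (matDeriv F3 t) (matDeriv F4 t) := by
  ext (i | i) (j | j) <;> simp [matDeriv, Matrix.fromBlocks]

end matDerivLemmas

/-! ### Auxiliary: block products -/

section prods
variable (x τ : ℂ) (q p : Matrix (Fin 2) (Fin 2) ℂ)

theorem P1aux (hτ : τ ≠ 0) (hrq : q⁻¹ * q = 1) :
    A0f q τ * B0f q τ = fromBlocks 0 0 0 (-1) := by
  simp [A0f, B0f, fromBlocks_multiply, mul_smul_comm, smul_smul, fromBlocks_smul,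
    Matrix.smul_mul, hrq, inv_mul_cancel₀ hτ]

theorem P2aux : A0f q τ * B1f q = 0 := by
  simp [A0f, B1f, fromBlocks_multiply, fromBlocks_zero]

theorem P3aux : A1f q p * B0f q τ = τ⁻¹ • fromBlocks 0 (q * p * q) 0 q := by
  simp [A1f, B0f, fromBlocks_multiply, mul_smul_comm, Matrix.mul_assoc]

theorem P4aux (hqr : q * q⁻¹ = 1) :
    A1f q p * B1f q = fromBlocks (-1) 0 (-p - q⁻¹) 0 := by
  have h : (-(p * q) - 1) * q⁻¹ = -p - q⁻¹ := by
    rw [sub_mul, neg_mul, Matrix.mul_assoc, hqr, Matrix.mul_one, Matrix.one_mul]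
  simp [A1f, B1f, fromBlocks_multiply, hqr, h]

theorem P5aux : A2c * B0f q τ = 0 := by
  simp [A2c, B0f, fromBlocks_multiply, mul_smul_comm, fromBlocks_zero]

theorem P6aux : A2c * B1f q = fromBlocks q⁻¹ 0 0 0 := by
  simp [A2c, B1f, fromBlocks_multiply]

theorem P7aux (hτ : τ ≠ 0) (hqr : q * q⁻¹ = 1) :
    B0f q τ * A0f q τ = fromBlocks (-1) 0 0 0 := by
  simp [A0f, B0f, fromBlocks_multiply, Matrix.smul_mul, mul_smul_comm, smul_smul,
    fromBlocks_smul, smul_neg, hqr, inv_mul_cancel₀ hτ, mul_inv_cancel₀ hτ, one_smul]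

theorem P8aux : B0f q τ * A1f q p = τ⁻¹ • fromBlocks q (-(q * p * q) - q) 0 0 := by
  have h : q * (-(p * q) - 1) = -(q * p * q) - q := by
    rw [Matrix.mul_sub, Matrix.mul_neg, Matrix.mul_one, Matrix.mul_assoc]
  simp [A1f, B0f, fromBlocks_multiply, Matrix.smul_mul, h]

theorem P9aux : B0f q τ * A2c = 0 := by
  simp [A2c, B0f, fromBlocks_multiply, Matrix.smul_mul, fromBlocks_zero]

theorem P10aux : B1f q * A0f q τ = 0 := by
  simp [A0f, B1f, fromBlocks_multiply, fromBlocks_zero]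

theorem P11aux (hqr : q * q⁻¹ = 1) (hrq : q⁻¹ * q = 1) :
    B1f q * A1f q p = fromBlocks 0 0 p (-1) := by
  have h : q⁻¹ * (q * p) = p := by rw [← Matrix.mul_assoc, hrq, Matrix.one_mul]
  simp [A1f, B1f, fromBlocks_multiply, hrq, h]

theorem P12aux : B1f q * A2c = fromBlocks 0 0 0 q⁻¹ := by
  simp [A2c, B1f, fromBlocks_multiply]

theorem comm_key (hx : x ≠ 0) (hτ : τ ≠ 0) (hqr : q * q⁻¹ = 1) (hrq : q⁻¹ * q = 1) :
    ((x ^ 2)⁻¹ • A0f q τ + x⁻¹ • A1f q p + A2c) * (B0f q τ + x⁻¹ • B1f q)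
      - (B0f q τ + x⁻¹ • B1f q) * ((x ^ 2)⁻¹ • A0f q τ + x⁻¹ • A1f q p + A2c)
    = (x ^ 2)⁻¹ • (fromBlocks 0 0 (-((2:ℂ) • p) - q⁻¹) 0)
      + x⁻¹ • (fromBlocks (q⁻¹ - τ⁻¹ • q) (τ⁻¹ • ((2:ℂ) • (q * p * q) + q)) 0
          (τ⁻¹ • q - q⁻¹)) := by
  simp only [add_mul, mul_add, smul_mul_assoc, mul_smul_comm,
    P1aux τ q hτ hrq, P2aux, P3aux, P4aux q p hqr, P5aux, P6aux, P7aux τ q hτ hqr, P8aux,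
    P9aux, P10aux, P11aux q p hqr hrq, P12aux, smul_zero, zero_add, add_zero, smul_smul]
  rw [← sub_eq_zero]
  simp only [fromBlocks_smul, sub_eq_add_neg, fromBlocks_neg, fromBlocks_add,
    ← fromBlocks_zero]
  rw [fromBlocks_inj]
  refine ⟨?_, ?_, ?_, ?_⟩ <;> module

end prods

/-- extraction of the two Laurent coefficients -/
theorem coeff_extract {V : Type*} [AddCommGroup V] [Module ℂ V] {M N : V}
    (h : ∀ x : ℂ, x ≠ 0 → (x ^ 2)⁻¹ • M + x⁻¹ • N = 0) : M = 0 ∧ N = 0 := by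
  have e1 := h 1 one_ne_zero
  have e2 := h (-1) (neg_ne_zero.mpr one_ne_zero)
  have hM : (2 : ℂ) • M = 0 := by
    have : (2 : ℂ) • M
        = (((1:ℂ) ^ 2)⁻¹ • M + (1:ℂ)⁻¹ • N) + ((((-1):ℂ) ^ 2)⁻¹ • M + ((-1):ℂ)⁻¹ • N) := by
      module
    rw [this, e1, e2, add_zero]
  have hN : (2 : ℂ) • N = 0 := by
    have : (2 : ℂ) • N
        = (((1:ℂ) ^ 2)⁻¹ • M + (1:ℂ)⁻¹ • N) - ((((-1):ℂ) ^ 2)⁻¹ • M + ((-1):ℂ)⁻¹ • N) := by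
      module
    rw [this, e1, e2, sub_zero]
  constructor
  · have := congrArg (fun v => (2:ℂ)⁻¹ • v) hM
    simpa [smul_smul] using this
  · have := congrArg (fun v => (2:ℂ)⁻¹ • v) hN
    simpa [smul_smul] using this

/-- explicit inverse of `Qf` -/
def Rf (q1 q2 u : ℝ → ℂ) (s : ℝ) : Matrix (Fin 2) (Fin 2) ℂ :=
  ((q1 s) ^ 2 + q2 s)⁻¹ • !![q1 s, -(u s); q2 s / u s, q1 s]

theorem Qf_mul_Rf {q1 q2 u : ℝ → ℂ} {s : ℝ} (hu : u s ≠ 0) (hd : (q1 s) ^ 2 + q2 s ≠ 0) :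
    Qf q1 q2 u s * Rf q1 q2 u s = 1 := by
  ext i j
  fin_cases i <;> fin_cases j <;>
    simp [Qf, Rf, Matrix.mul_apply, Fin.sum_univ_two, Matrix.one_apply] <;>
    field_simp <;> ring

theorem Rf_mul_Qf {q1 q2 u : ℝ → ℂ} {s : ℝ} (hu : u s ≠ 0) (hd : (q1 s) ^ 2 + q2 s ≠ 0) :
    Rf q1 q2 u s * Qf q1 q2 u s = 1 := by
  ext i j
  fin_cases i <;> fin_cases j <;>
    simp [Qf, Rf, Matrix.mul_apply, Fin.sum_univ_two, Matrix.one_apply] <;>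
    field_simp <;> ring

theorem MDiff_Qf {q1 q2 u : ℝ → ℂ} {t : ℝ}
    (h1 : DifferentiableAt ℝ q1 t) (h2 : DifferentiableAt ℝ q2 t)
    (h5 : DifferentiableAt ℝ u t) (hu : u t ≠ 0) :
    MDiff (Qf q1 q2 u) t := by
  intro i j
  fin_cases i <;> fin_cases j <;> simp only [Qf] <;> norm_num
  · exact h1
  · exact h5
  · exact (h2.neg).div h5 hu
  · exact h1

theorem MDiff_Pf {p1 p2 q2 u : ℝ → ℂ} {θ : ℂ} {t : ℝ}
    (h2 : DifferentiableAt ℝ q2 t) (h3 : DifferentiableAt ℝ p1 t)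
    (h4 : DifferentiableAt ℝ p2 t) (h5 : DifferentiableAt ℝ u t) (hu : u t ≠ 0) :
    MDiff (Pf p1 p2 q2 θ u) t := by
  intro i j
  fin_cases i <;> fin_cases j <;> simp only [Pf] <;> norm_num
  · exact h3.div_const 2
  · exact h4.mul h5
  · exact ((h4.mul h2).sub_const θ).div h5 hu
  · exact h3.div_const 2

theorem MDiff_Rf {q1 q2 u : ℝ → ℂ} {t : ℝ}
    (h1 : DifferentiableAt ℝ q1 t) (h2 : DifferentiableAt ℝ q2 t)
    (h5 : DifferentiableAt ℝ u t) (hu : u t ≠ 0) (hd : (q1 t) ^ 2 + q2 t ≠ 0) :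
    MDiff (Rf q1 q2 u) t := by
  have hdinv : DifferentiableAt ℝ (fun s => ((q1 s) ^ 2 + q2 s)⁻¹) t :=
    (((h1.pow 2).add h2).inv hd)
  intro i j
  fin_cases i <;> fin_cases j <;> simp only [Rf, Matrix.smul_apply, smul_eq_mul] <;> norm_num
  · exact hdinv.mul h1
  · exact hdinv.mul h5
  · exact hdinv.mul (h2.div h5 hu)
  · exact hdinv.mul h1
theorem lax_pair_matrix_PIII_D8
    (θi2 θi3 : ℂ) (hFuchs : θi2 + θi3 = 0)
    (α β : ℝ) (h0 : (0:ℝ) ∉ Set.Ioo α β)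
    (q1 q2 p1 p2 u : ℝ → ℂ)
    (hdiff : ∀ t ∈ Set.Ioo α β, DifferentiableAt ℝ q1 t ∧ DifferentiableAt ℝ q2 t ∧
      DifferentiableAt ℝ p1 t ∧ DifferentiableAt ℝ p2 t ∧ DifferentiableAt ℝ u t)
    (hu : ∀ t ∈ Set.Ioo α β, u t ≠ 0)
    (hdet : ∀ t ∈ Set.Ioo α β, (q1 t) ^ 2 + q2 t ≠ 0)
    (Q P : ℝ → Matrix (Fin 2) (Fin 2) ℂ)
    (hQ : Q = Qf q1 q2 u) (hP : P = Pf p1 p2 q2 θi2 u) :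
    -- zero curvature:  ∂A/∂t − ∂B/∂x + [A,B] = O
    (∀ t ∈ Set.Ioo α β, ∀ x : ℂ, x ≠ 0 →
        matDeriv (fun s => Afun Q P x s) t
          = -((x ^ 2)⁻¹ • B1f (Q t))
            - (Afun Q P x t * Bfun Q x t - Bfun Q x t * Afun Q P x t))
    ↔
    -- `tQ′ = 2QPQ + Q` and `tP′ = −2PQP − P + I − tQ⁻²`
    ((∀ t ∈ Set.Ioo α β,
        (t : ℂ) • matDeriv Q t = (2:ℂ) • (Q t * P t * Q t) + Q t) ∧
      (∀ t ∈ Set.Ioo α β,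
        (t : ℂ) • matDeriv P t
          = -((2:ℂ) • (P t * Q t * P t)) - P t + (1 : Matrix (Fin 2) (Fin 2) ℂ)
            - (t : ℂ) • ((Q t)⁻¹ * (Q t)⁻¹))) := by
  have main : ∀ t ∈ Set.Ioo α β,
      ((∀ x : ℂ, x ≠ 0 →
        matDeriv (fun s => Afun Q P x s) t
          = -((x ^ 2)⁻¹ • B1f (Q t))
            - (Afun Q P x t * Bfun Q x t - Bfun Q x t * Afun Q P x t))
      ↔ ((t : ℂ) • matDeriv Q t = (2:ℂ) • (Q t * P t * Q t) + Q t ∧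
         (t : ℂ) • matDeriv P t
          = -((2:ℂ) • (P t * Q t * P t)) - P t + (1 : Matrix (Fin 2) (Fin 2) ℂ)
            - (t : ℂ) • ((Q t)⁻¹ * (Q t)⁻¹))) := by
    intro t ht
    obtain ⟨hd1, hd2, hd3, hd4, hd5⟩ := hdiff t ht
    have hus : u t ≠ 0 := hu t ht
    have hds : (q1 t) ^ 2 + q2 t ≠ 0 := hdet t ht
    have htne : t ≠ 0 := fun h => h0 (h ▸ ht)
    have hτ : (t : ℂ) ≠ 0 := Complex.ofReal_ne_zero.mpr htne
    set R : ℝ → Matrix (Fin 2) (Fin 2) ℂ := Rf q1 q2 u with hRdef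
    have hqr : Q t * R t = 1 := by rw [hQ]; exact Qf_mul_Rf hus hds
    have hrq : R t * Q t = 1 := by rw [hQ]; exact Rf_mul_Qf hus hds
    have hrinv : (Q t)⁻¹ = R t := inv_eq_right_inv hqr
    have hqq : Q t * (Q t)⁻¹ = 1 := by rw [hrinv]; exact hqr
    have hqq' : (Q t)⁻¹ * Q t = 1 := by rw [hrinv]; exact hrq
    have hrqX : ∀ X : Matrix (Fin 2) (Fin 2) ℂ, R t * (Q t * X) = X := fun X => by
      rw [← Matrix.mul_assoc, hrq, Matrix.one_mul]
    have hqrX : ∀ X : Matrix (Fin 2) (Fin 2) ℂ, Q t * (R t * X) = X := fun X => by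
      rw [← Matrix.mul_assoc, hqr, Matrix.one_mul]
    have hQd : MDiff Q t := by rw [hQ]; exact MDiff_Qf hd1 hd2 hd5 hus
    have hPd : MDiff P t := by rw [hP]; exact MDiff_Pf hd2 hd3 hd4 hd5 hus
    have hRd : MDiff R t := MDiff_Rf hd1 hd2 hd5 hus hds
    have hev : ∀ᶠ s in nhds t, s ∈ Set.Ioo α β := isOpen_Ioo.eventually_mem ht
    have hevQR : ∀ᶠ s in nhds t, Q s * R s = (1 : Matrix (Fin 2) (Fin 2) ℂ) :=
      hev.mono fun s hs => by rw [hQ]; exact Qf_mul_Rf (hu s hs) (hdet s hs)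
    have hevInv : ∀ᶠ s in nhds t, (Q s)⁻¹ = R s :=
      hev.mono fun s hs =>
        inv_eq_right_inv (by rw [hQ]; exact Qf_mul_Rf (hu s hs) (hdet s hs))
    -- derivative of the inverse
    have hprod0 : matDeriv Q t * R t + Q t * matDeriv R t = 0 := by
      rw [← matDeriv_mul hQd hRd, matDeriv_congr hevQR, matDeriv_const]
    have hr' : matDeriv R t = -(R t * matDeriv Q t * R t) := by
      have h1 : R t * (matDeriv Q t * R t) + R t * (Q t * matDeriv R t) = 0 := by
        rw [← Matrix.mul_add, hprod0, Matrix.mul_zero]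
      rw [← Matrix.mul_assoc, ← Matrix.mul_assoc, hrq, Matrix.one_mul] at h1
      exact eq_neg_of_add_eq_zero_right h1
    -- derivative of the A-side
    have hFG : (fun s => A0f (Q s) (s : ℂ))
        =ᶠ[nhds t] (fun s => fromBlocks 0 0 (-((s : ℂ) • R s)) 0) :=
      hevInv.mono fun s hs => by simp only [A0f, hs]
    have hMA0 : MDiff (fun s => A0f (Q s) (s : ℂ)) t :=
      MDiff.congr_of_eventuallyEq hFG
        (MDiff.fromBlocks (.const 0) (.const 0) ((MDiff.ofReal_smul hRd).neg) (.const 0))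
    have hDA0 : matDeriv (fun s => A0f (Q s) (s : ℂ)) t
        = fromBlocks 0 0 (-(R t + (t : ℂ) • matDeriv R t)) 0 := by
      rw [matDeriv_congr hFG, matDeriv_fromBlocks, matDeriv_neg,
        matDeriv_ofReal_smul hRd, matDeriv_const]
    have hMA1 : MDiff (fun s => A1f (Q s) (P s)) t := by
      show MDiff (fun s => fromBlocks (Q s * P s) (-(Q s)) 1 (-(P s * Q s) - 1)) t
      exact MDiff.fromBlocks (hQd.mul hPd) hQd.neg (.const 1)
        (((hPd.mul hQd).neg).sub (.const 1))
    have hDA1 : matDeriv (fun s => A1f (Q s) (P s)) t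
        = fromBlocks (matDeriv Q t * P t + Q t * matDeriv P t) (-(matDeriv Q t)) 0
            (-(matDeriv P t * Q t + P t * matDeriv Q t)) := by
      show matDeriv (fun s => fromBlocks (Q s * P s) (-(Q s)) 1 (-(P s * Q s) - 1)) t = _
      rw [matDeriv_fromBlocks, matDeriv_mul hQd hPd, matDeriv_neg,
        matDeriv_sub ((hPd.mul hQd).neg) (.const 1), matDeriv_neg,
        matDeriv_mul hPd hQd, matDeriv_const, sub_zero]
    have hDAfun : ∀ x : ℂ, matDeriv (fun s => Afun Q P x s) t
        = (x ^ 2)⁻¹ • matDeriv (fun s => A0f (Q s) (s : ℂ)) t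
          + x⁻¹ • matDeriv (fun s => A1f (Q s) (P s)) t := by
      intro x
      show matDeriv (fun s => (x ^ 2)⁻¹ • A0f (Q s) (s : ℂ) + x⁻¹ • A1f (Q s) (P s) + A2c) t = _
      rw [matDeriv_add ((MDiff.smul _ hMA0).add (MDiff.smul _ hMA1)) (.const A2c),
        matDeriv_add (MDiff.smul _ hMA0) (MDiff.smul _ hMA1),
        matDeriv_smul, matDeriv_smul, matDeriv_const, add_zero]
    -- the two Laurent coefficients of the zero-curvature equation
    set Mm : Matrix (Fin 2 ⊕ Fin 2) (Fin 2 ⊕ Fin 2) ℂ :=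
      fromBlocks 0 0
        (-((t : ℂ) • matDeriv R t) - ((2:ℂ) • P t) - R t) 0 with hMm
    set Nn : Matrix (Fin 2 ⊕ Fin 2) (Fin 2 ⊕ Fin 2) ℂ :=
      fromBlocks
        (matDeriv Q t * P t + Q t * matDeriv P t + R t - ((t : ℂ))⁻¹ • Q t)
        (-(matDeriv Q t) + ((t : ℂ))⁻¹ • ((2:ℂ) • (Q t * P t * Q t) + Q t))
        0
        (-(matDeriv P t * Q t + P t * matDeriv Q t) + ((t : ℂ))⁻¹ • Q t - R t) with hNn
    have hZCiff : ∀ x : ℂ, x ≠ 0 →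
        ((matDeriv (fun s => Afun Q P x s) t
            = -((x ^ 2)⁻¹ • B1f (Q t))
              - (Afun Q P x t * Bfun Q x t - Bfun Q x t * Afun Q P x t))
          ↔ ((x ^ 2)⁻¹ • Mm + x⁻¹ • Nn = 0)) := by
      intro x hx
      have hcomm := comm_key x (t : ℂ) (Q t) (P t) hx hτ hqq hqq'
      rw [hDAfun x, hDA0, hDA1]
      simp only [Afun, Bfun]
      rw [hcomm]
      simp only [B1f, hrinv, hMm, hNn]
      rw [← sub_eq_zero]
      rw [show
        ((x ^ 2)⁻¹ • fromBlocks 0 0 (-(R t + (t : ℂ) • matDeriv R t)) 0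
          + x⁻¹ • fromBlocks (matDeriv Q t * P t + Q t * matDeriv P t) (-(matDeriv Q t)) 0
              (-(matDeriv P t * Q t + P t * matDeriv Q t)))
        - (-((x ^ 2)⁻¹ • fromBlocks 0 0 (R t) 0)
            - ((x ^ 2)⁻¹ • fromBlocks 0 0 (-((2:ℂ) • P t) - R t) 0
              + x⁻¹ • fromBlocks (R t - ((t:ℂ))⁻¹ • Q t)
                  (((t:ℂ))⁻¹ • ((2:ℂ) • (Q t * P t * Q t) + Q t)) 0
                  (((t:ℂ))⁻¹ • Q t - R t)))
        = (x ^ 2)⁻¹ • fromBlocks 0 0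
            (-((t : ℂ) • matDeriv R t) - ((2:ℂ) • P t) - R t) 0
          + x⁻¹ • fromBlocks
              (matDeriv Q t * P t + Q t * matDeriv P t + R t - ((t : ℂ))⁻¹ • Q t)
              (-(matDeriv Q t) + ((t : ℂ))⁻¹ • ((2:ℂ) • (Q t * P t * Q t) + Q t))
              0
              (-(matDeriv P t * Q t + P t * matDeriv Q t) + ((t : ℂ))⁻¹ • Q t - R t)
        from by
          simp only [fromBlocks_smul, sub_eq_add_neg, neg_add, fromBlocks_neg,
            fromBlocks_add, neg_neg, ← fromBlocks_zero]
          rw [fromBlocks_inj]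
          refine ⟨?_, ?_, ?_, ?_⟩ <;> module]
    have hZC : (∀ x : ℂ, x ≠ 0 →
        matDeriv (fun s => Afun Q P x s) t
          = -((x ^ 2)⁻¹ • B1f (Q t))
            - (Afun Q P x t * Bfun Q x t - Bfun Q x t * Afun Q P x t))
        ↔ (Mm = 0 ∧ Nn = 0) := by
      constructor
      · intro h
        exact coeff_extract fun x hx => (hZCiff x hx).mp (h x hx)
      · rintro ⟨h1, h2⟩ x hx
        exact (hZCiff x hx).mpr (by rw [h1, h2]; simp)
    rw [hZC]
    have hMiff : Mm = 0 ↔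
        -((t : ℂ) • matDeriv R t) - ((2:ℂ) • P t) - R t = 0 := by
      rw [hMm, ← fromBlocks_zero, fromBlocks_inj]
      simp
    have hNiff : Nn = 0 ↔
        (matDeriv Q t * P t + Q t * matDeriv P t + R t - ((t : ℂ))⁻¹ • Q t = 0 ∧
         -(matDeriv Q t) + ((t : ℂ))⁻¹ • ((2:ℂ) • (Q t * P t * Q t) + Q t) = 0 ∧
         -(matDeriv P t * Q t + P t * matDeriv Q t) + ((t : ℂ))⁻¹ • Q t - R t = 0) := by
      rw [hNn, ← fromBlocks_zero, fromBlocks_inj]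
      simp [and_assoc]
    rw [hMiff, hNiff, hrinv]
    constructor
    · rintro ⟨hM, hN1, hN2, hN4⟩
      have hq'' : matDeriv Q t = ((t:ℂ))⁻¹ • ((2:ℂ) • (Q t * P t * Q t) + Q t) := by
        rwa [neg_add_eq_zero] at hN2
      have hE1 : (t : ℂ) • matDeriv Q t = (2:ℂ) • (Q t * P t * Q t) + Q t := by
        rw [hq'', smul_smul, mul_inv_cancel₀ hτ, one_smul]
      refine ⟨hE1, ?_⟩
      have hqp' : Q t * matDeriv P t
          = ((t:ℂ))⁻¹ • Q t - R t - matDeriv Q t * P t := by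
        rw [← sub_eq_zero, ← hN1]; abel
      have h2 : (t:ℂ) • matDeriv P t = R t * ((t:ℂ) • (Q t * matDeriv P t)) := by
        rw [mul_smul_comm, ← Matrix.mul_assoc, hrq, Matrix.one_mul]
      rw [h2, hqp', hq'']
      simp only [smul_sub, smul_smul, mul_inv_cancel₀ hτ, one_smul, smul_mul_assoc,
        Matrix.mul_sub, Matrix.sub_mul, Matrix.mul_add, Matrix.add_mul, mul_smul_comm,
        Matrix.mul_assoc, neg_smul, Matrix.mul_neg, Matrix.neg_mul, neg_neg,
          hqr, hrq, hrqX, hqrX, Matrix.mul_one, Matrix.one_mul]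
      abel
    · rintro ⟨hE1, hE2⟩
      have hq'' : matDeriv Q t = ((t:ℂ))⁻¹ • ((2:ℂ) • (Q t * P t * Q t) + Q t) := by
        rw [← hE1, smul_smul, inv_mul_cancel₀ hτ, one_smul]
      have hp'' : matDeriv P t = ((t:ℂ))⁻¹ • (-((2:ℂ) • (P t * Q t * P t)) - P t + 1
          - (t:ℂ) • (R t * R t)) := by
        rw [← hE2, smul_smul, inv_mul_cancel₀ hτ, one_smul]
      refine ⟨?_, ?_, ?_, ?_⟩
      · rw [hr', hq'']
        simp only [smul_neg, smul_smul, mul_inv_cancel₀ hτ, one_smul, smul_mul_assoc,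
          mul_smul_comm, Matrix.mul_add, Matrix.add_mul, Matrix.mul_assoc,
          neg_smul, Matrix.mul_neg, Matrix.neg_mul, neg_neg,
          hqr, hrq, hrqX, hqrX, Matrix.mul_one, Matrix.one_mul]
        abel
      · rw [hq'', hp'']
        simp only [smul_sub, smul_add, smul_neg, smul_smul, mul_inv_cancel₀ hτ,
          inv_mul_cancel₀ hτ, one_smul, smul_mul_assoc, mul_smul_comm,
          Matrix.mul_sub, Matrix.sub_mul, Matrix.mul_add, Matrix.add_mul,
          Matrix.mul_assoc, neg_smul, Matrix.mul_neg, Matrix.neg_mul, neg_neg,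
          hqr, hrq, hrqX, hqrX, Matrix.mul_one, Matrix.one_mul]
        abel
      · rw [hq'']; abel
      · rw [hq'', hp'']
        simp only [smul_sub, smul_add, smul_neg, smul_smul, mul_inv_cancel₀ hτ,
          inv_mul_cancel₀ hτ, one_smul, smul_mul_assoc, mul_smul_comm,
          Matrix.mul_sub, Matrix.sub_mul, Matrix.mul_add, Matrix.add_mul,
          Matrix.mul_assoc, neg_smul, Matrix.mul_neg, Matrix.neg_mul, neg_neg,
          hqr, hrq, hrqX, hqrX, Matrix.mul_one, Matrix.one_mul]
        abel
  constructor
  · intro h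
    exact ⟨fun t ht => ((main t ht).mp (h t ht)).1, fun t ht => ((main t ht).mp (h t ht)).2⟩
  · rintro ⟨h1, h2⟩ t ht
    exact (main t ht).mpr ⟨h1 t ht, h2 t ht⟩

end
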